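/- Under the additional hypotheses that $\Lambda$ has a least element $\lambda$, the action of $G_\lambda$ on $X__\lambda$ is free, and the bonding homomorphism $\nu_\lambda^\alpha : G_\alpha \to G_\lambda$ is injective for each $\alpha$, the natural map $\psi : (\varprojlim X_\alpha)/(\varprojlim G_\alpha) \to \varprojlim (X_\alpha/G_\alpha)$, $\overline{(x_\alpha)} \mapsto (\overline{x_\alpha})$, is a homeomorphism. -/

import Mathlib

open MulAction

/-- The inverse limit of an inverse system of spaces, as a subspace of the
product. -/
abbrev InvLimit {Λ : Type*} [Preorder Λ] (X : Λ → Type*) [∀ α, TopologicalSpace (X α)]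
    (π : ∀ {α β : Λ}, α ≤ β → X β → X α) : Type _ :=
  {x : ∀ α, X α // ∀ ⦃α β : Λ⦄ (h : α ≤ β), π h (x β) = x α}

/-- The set of threads of an inverse system of groups, as a subgroup of the
product group. -/
def invLimitSubgroup {Λ : Type*} [Preorder Λ] (G : Λ → Type*) [∀ α, Group (G α)]
    (ν : ∀ {α β : Λ}, α ≤ β → G β →* G α) : Subgroup (∀ α, G α) where
  carrier := {g | ∀ ⦃α β : Λ⦄ (h : α ≤ β), ν h (g β) = g α}
  one_mem' := by intro α β h; simp
  mul_mem' := by intro a b ha hb α β h; simp [map_mul, ha h, hb h]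
  inv_mem' := by intro a ha α β h; simp [map_inv, ha h]

/-- The orbit equivalence relation of the coordinatewise action of
`lim G_α` on `lim X_α`. -/
def limOrbitSetoid {Λ : Type*} [Preorder Λ] (X : Λ → Type*) [∀ α, TopologicalSpace (X α)]
    (G : Λ → Type*) [∀ α, Group (G α)] [∀ α, MulAction (G α) (X α)]
    (π : ∀ {α β : Λ}, α ≤ β → X β → X α)
    (ν : ∀ {α β : Λ}, α ≤ β → G β →* G α) : Setoid (InvLimit X π) where
  r x y := ∃ g : invLimitSubgroup G ν, ∀ α, (g : ∀ α, G α) α • y.1 α = x.1 α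
  iseqv := by
    constructor
    · exact fun x => ⟨1, fun α => one_smul _ _⟩
    · rintro x y ⟨g, hg⟩
      exact ⟨g⁻¹, fun α => by
        rw [← hg α]; simp [Subgroup.coe_inv, Pi.inv_apply, inv_smul_smul]⟩
    · rintro x y z ⟨g, hg⟩ ⟨g', hg'⟩
      exact ⟨g * g', fun α => by
        simp only [Subgroup.coe_mul, Pi.mul_apply, mul_smul, hg' α, hg α]⟩

/-- The map induced on orbit spaces by an equivariant bonding map. -/
def quotBonding {Λ : Type*} [Preorder Λ] (X : Λ → Type*) [∀ α, TopologicalSpace (X α)]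
    (G : Λ → Type*) [∀ α, Group (G α)] [∀ α, MulAction (G α) (X α)]
    (π : ∀ {α β : Λ}, α ≤ β → X β → X α)
    (ν : ∀ {α β : Λ}, α ≤ β → G β →* G α)
    (hequiv : ∀ {α β : Λ} (h : α ≤ β) (g : G β) (x : X β),
      π h (g • x) = ν h g • π h x)
    {α β : Λ} (h : α ≤ β) :
    Quotient (orbitRel (G β) (X β)) → Quotient (orbitRel (G α) (X α)) :=
  Quotient.lift (fun x => Quotient.mk (orbitRel (G α) (X α)) (π h x)) <| by
    rintro a b hab
    obtain ⟨g, rfl⟩ : ∃ g : G β, g • b = a := hab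
    exact Quotient.sound ⟨ν h g, (hequiv h g b).symm⟩

/-- If `Λ` has a least element `λ₀`, the `G_λ₀`-action on `X_λ₀` is free and
each bonding homomorphism into `G_λ₀` is injective, then the natural map
`(lim X_α)/(lim G_α) → lim (X_α/G_α)` is a homeomorphism. -/
theorem orbit_space_of_limit_homeomorphic_limit_of_orbit_spaces
    {Λ : Type*} [Preorder Λ] [IsDirected Λ (· ≤ ·)]
    (X : Λ → Type*) [∀ α, TopologicalSpace (X α)]
    [∀ α, CompactSpace (X α)] [∀ α, T2Space (X α)] [∀ α, Nonempty (X α)]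
    (G : Λ → Type*) [∀ α, Group (G α)] [∀ α, TopologicalSpace (G α)]
    [∀ α, IsTopologicalGroup (G α)] [∀ α, CompactSpace (G α)]
    [∀ α, MulAction (G α) (X α)] [∀ α, ContinuousSMul (G α) (X α)]
    (π : ∀ {α β : Λ}, α ≤ β → X β → X α)
    (hπcont : ∀ {α β : Λ} (h : α ≤ β), Continuous (π h))
    (hπid : ∀ (α : Λ) (x : X α), π (le_refl α) x = x)
    (hπcomp : ∀ {α β γ : Λ} (h₁ : α ≤ β) (h₂ : β ≤ γ) (x : X γ),
      π h₁ (π h₂ x) = π (h₁.trans h₂) x)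
    (ν : ∀ {α β : Λ}, α ≤ β → G β →* G α)
    (hνcont : ∀ {α β : Λ} (h : α ≤ β), Continuous (ν h))
    (hνid : ∀ (α : Λ) (g : G α), ν (le_refl α) g = g)
    (hνcomp : ∀ {α β γ : Λ} (h₁ : α ≤ β) (h₂ : β ≤ γ) (g : G γ),
      ν h₁ (ν h₂ g) = ν (h₁.trans h₂) g)
    (hequiv : ∀ {α β : Λ} (h : α ≤ β) (g : G β) (x : X β),
      π h (g • x) = ν h g • π h x)
    (lam : Λ) (hlam : ∀ α, lam ≤ α)
    (hfree : ∀ (g : G lam) (x : X lam), g • x = x → g = 1)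
    (hinj : ∀ α, Function.Injective (ν (hlam α))) :
    ∃ ψ : Quotient (limOrbitSetoid X G π ν) ≃ₜ
        {q : ∀ α, Quotient (MulAction.orbitRel (G α) (X α)) //
          ∀ ⦃α β : Λ⦄ (h : α ≤ β), quotBonding X G π ν hequiv h (q β) = q α},
      ∀ (x : InvLimit X π) (α : Λ),
        (ψ (Quotient.mk (limOrbitSetoid X G π ν) x)).1 α =
          Quotient.mk (MulAction.orbitRel (G α) (X α)) (x.1 α) := by
  classical
  haveI : ∀ α, ProperSMul (G α) (X α) := fun α =>
    ⟨((continuous_fst.smul continuous_snd).prodMk continuous_snd).isProperMap⟩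
  haveI : ∀ α, T2Space (Quotient (orbitRel (G α) (X α))) := fun α =>
    t2Space_quotient_mulAction_of_properSMul
  have hx2 : ∀ (x : InvLimit X π) ⦃α β : Λ⦄ (h : α ≤ β), π h (x.1 β) = x.1 α :=
    fun x _ _ h => x.2 h
  haveI : CompactSpace (InvLimit X π) := by
    have hcl : IsClosed {x : ∀ α, X α | ∀ ⦃α β : Λ⦄ (h : α ≤ β), π h (x β) = x α} := by
      have heq : {x : ∀ α, X α | ∀ ⦃α β : Λ⦄ (h : α ≤ β), π h (x β) = x α} =
          ⋂ (α : Λ) (β : Λ) (h : α ≤ β), {x : ∀ α, X α | π h (x β) = x α} := by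
        ext x
        simp only [Set.mem_iInter, Set.mem_setOf_eq]
      rw [heq]
      exact isClosed_iInter fun α => isClosed_iInter fun β => isClosed_iInter fun h =>
        isClosed_eq ((hπcont h).comp (continuous_apply β)) (continuous_apply α)
    exact isCompact_iff_compactSpace.mp hcl.isCompact
  set T := {q : ∀ α, Quotient (MulAction.orbitRel (G α) (X α)) //
      ∀ ⦃α β : Λ⦄ (h : α ≤ β), quotBonding X G π ν hequiv h (q β) = q α} with hT
  have fthread : ∀ (x : InvLimit X π) ⦃α β : Λ⦄ (h : α ≤ β),
      quotBonding X G π ν hequiv h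
        (Quotient.mk (orbitRel (G β) (X β)) (x.1 β)) =
        Quotient.mk (orbitRel (G α) (X α)) (x.1 α) := by
    intro x α β h
    show Quotient.mk _ (π h (x.1 β)) = _
    exact congrArg _ (hx2 x h)
  let f : InvLimit X π → T := fun x =>
    ⟨fun α => Quotient.mk _ (x.1 α), fthread x⟩
  have fresp : ∀ a b : InvLimit X π, (limOrbitSetoid X G π ν).r a b → f a = f b := by
    rintro a b ⟨g, hg⟩
    refine Subtype.ext (funext fun α => ?_)
    show Quotient.mk _ (a.1 α) = Quotient.mk _ (b.1 α)
    exact Quotient.sound ⟨(g : ∀ α, G α) α, hg α⟩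
  let φ : Quotient (limOrbitSetoid X G π ν) → T := Quotient.lift f fresp
  have huniq : ∀ (α : Λ) (x y : InvLimit X π) (g g' : G α),
      g • y.1 α = x.1 α → g' • y.1 α = x.1 α → g = g' := by
    intro α x y g g' hg hg'
    apply hinj α
    have key : ∀ k : G α, k • y.1 α = x.1 α → ν (hlam α) k • y.1 lam = x.1 lam := by
      intro k hk
      have h0 := hequiv (hlam α) k (y.1 α)
      rw [hk, hx2 x (hlam α), hx2 y (hlam α)] at h0
      exact h0.symm
    have h1 := key g hg
    have h2 := key g' hg'
    have h3 : (ν (hlam α) g')⁻¹ * ν (hlam α) g = 1 := by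
      apply hfree _ (y.1 lam)
      rw [mul_smul, h1, ← h2, inv_smul_smul]
    calc ν (hlam α) g = ν (hlam α) g' * ((ν (hlam α) g')⁻¹ * ν (hlam α) g) := by
          rw [← mul_assoc, mul_inv_cancel, one_mul]
      _ = ν (hlam α) g' := by rw [h3, mul_one]
  have hinjφ : Function.Injective φ := by
    intro a b
    refine Quotient.inductionOn₂ a b fun x y hxy => Quotient.sound ?_
    have hco : ∀ α, ∃ g : G α, g • y.1 α = x.1 α := by
      intro α
      have h1 := congrArg (fun t : T => t.1 α) hxy
      exact Quotient.exact h1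
    choose g hg using hco
    refine ⟨⟨g, ?_⟩, hg⟩
    intro α β h
    apply huniq α x y
    · have h0 := hequiv h (g β) (y.1 β)
      rw [hg β, hx2 x h, hx2 y h] at h0
      exact h0.symm
    · exact hg α
  have hsurjφ : Function.Surjective φ := by
    intro q
    have hfibc : ∀ α, IsClosed {z : X α | Quotient.mk (orbitRel (G α) (X α)) z = q.1 α} := by
      intro α
      have hfiber : {z : X α | Quotient.mk (orbitRel (G α) (X α)) z = q.1 α} =
          Set.range (fun g : G α => g • Quotient.out (q.1 α)) := by
        ext z
        simp only [Set.mem_setOf_eq, Set.mem_range]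
        constructor
        · intro hz
          have h1 : Quotient.mk (orbitRel (G α) (X α)) z =
              Quotient.mk (orbitRel (G α) (X α)) (Quotient.out (q.1 α)) := by
            rw [hz, Quotient.out_eq]
          exact Quotient.exact h1
        · intro hz
          have h1 : Quotient.mk (orbitRel (G α) (X α)) z =
              Quotient.mk (orbitRel (G α) (X α)) (Quotient.out (q.1 α)) :=
            Quotient.sound hz
          rw [h1, Quotient.out_eq]
      rw [hfiber]
      exact (isCompact_range (continuous_id.smul continuous_const)).isClosed
    let C : Λ → Set (∀ α, X α) := fun α =>
      ((fun x : ∀ γ, X γ => x α) ⁻¹'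
        {z : X α | Quotient.mk (orbitRel (G α) (X α)) z = q.1 α}) ∩
      ⋂ (β : Λ) (h : β ≤ α), {x : ∀ γ, X γ | x β = π h (x α)}
    have hmem : ∀ (α : Λ) (x : ∀ γ, X γ), x ∈ C α ↔
        (Quotient.mk (orbitRel (G α) (X α)) (x α) = q.1 α ∧
          ∀ ⦃β : Λ⦄ (h : β ≤ α), x β = π h (x α)) := by
      intro α x
      simp only [C, Set.mem_inter_iff, Set.mem_preimage, Set.mem_iInter, Set.mem_setOf_eq]
    have hCcl : ∀ α, IsClosed (C α) := by
      intro α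
      exact ((hfibc α).preimage (continuous_apply α)).inter
        (isClosed_iInter fun β => isClosed_iInter fun h =>
          isClosed_eq (continuous_apply β) ((hπcont h).comp (continuous_apply α)))
    have hCne : ∀ α, (C α).Nonempty := by
      intro α
      refine ⟨fun γ => if h : γ ≤ α then π h (Quotient.out (q.1 α)) else
        Classical.arbitrary _, (hmem α _).mpr ⟨?_, ?_⟩⟩
      · rw [dif_pos (le_refl α), hπid, Quotient.out_eq]
      · intro β h
        rw [dif_pos h, dif_pos (le_refl α), hπid]
    have hCdir : Directed (· ⊇ ·) C := by
      intro α β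
      obtain ⟨γ, hαγ, hβγ⟩ := directed_of (· ≤ ·) α β
      have key : ∀ {δ : Λ} (h : δ ≤ γ), C γ ⊆ C δ := by
        intro δ h x hx
        rw [hmem γ x] at hx
        rw [hmem δ x]
        constructor
        · rw [hx.2 h]
          have h1 : Quotient.mk (orbitRel (G δ) (X δ)) (π h (x γ)) =
              quotBonding X G π ν hequiv h (Quotient.mk (orbitRel (G γ) (X γ)) (x γ)) := rfl
          rw [h1, hx.1]
          exact q.2 h
        · intro β' h'
          rw [hx.2 (h'.trans h), hx.2 h, hπcomp]
      exact ⟨γ, key hαγ, key hβγ⟩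
    haveI : Nonempty Λ := ⟨lam⟩
    obtain ⟨x, hx⟩ := IsCompact.nonempty_iInter_of_directed_nonempty_isCompact_isClosed
      C hCdir hCne (fun α => (hCcl α).isCompact) hCcl
    simp only [Set.mem_iInter] at hx
    have hx' : ∀ α, Quotient.mk (orbitRel (G α) (X α)) (x α) = q.1 α ∧
        ∀ ⦃β : Λ⦄ (h : β ≤ α), x β = π h (x α) := fun α => (hmem α x).mp (hx α)
    refine ⟨Quotient.mk _ ⟨x, fun α β h => ((hx' β).2 h).symm⟩, ?_⟩
    exact Subtype.ext (funext fun α => (hx' α).1)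
  have hφc : Continuous φ := by
    apply Continuous.quotient_lift
    apply Continuous.subtype_mk
    exact continuous_pi fun α =>
      continuous_quot_mk.comp ((continuous_apply α).comp continuous_subtype_val)
  exact ⟨Continuous.homeoOfEquivCompactToT2
    (f := Equiv.ofBijective φ ⟨hinjφ, hsurjφ⟩) hφc, fun x α => rfl⟩
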